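/- Let u, v ∈ ℝⁿ be unit ℓ₂-norm vectors with ⟨u, v⟩ ≥ 0. If the operator norm ‖u uᵀ − v vᵀ‖₂ ≤ ε, then ‖u − v‖₂ ≤ √2 · ε. -/

import Mathlib

open scoped BigOperators

/-- Euclidean (ℓ₂) norm of a finitely-indexed real vector. -/
noncomputable def enorm {ι : Type*} [Fintype ι] (v : ι → ℝ) : ℝ :=
  Real.sqrt (∑ i, v i ^ 2)

/-- Euclidean inner product of two real vectors. -/
def ip {ι : Type*} [Fintype ι] (u v : ι → ℝ) : ℝ := ∑ i, u i * v i

/-- Spectral (ℓ₂ operator) norm of a real matrix: supremum of ‖A x‖ over unit vectors x. -/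
noncomputable def specNorm {m n : Type*} [Fintype m] [Fintype n] (A : Matrix m n ℝ) : ℝ :=
  sSup ((fun x : n → ℝ => _root_.enorm (A.mulVec x)) '' {x | _root_.enorm x = 1})

/-- Frobenius norm of a real matrix. -/
noncomputable def frobNorm {m n : Type*} [Fintype m] [Fintype n] (A : Matrix m n ℝ) : ℝ :=
  Real.sqrt (∑ i, ∑ j, A i j ^ 2)

/-- Smallest singular value of a real matrix: infimum of ‖A x‖ over unit vectors x. -/
noncomputable def smin {m n : Type*} [Fintype m] [Fintype n] (A : Matrix m n ℝ) : ℝ :=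
  sInf ((fun x : n → ℝ => _root_.enorm (A.mulVec x)) '' {x | _root_.enorm x = 1})

/-- Rank-one outer product u vᵀ. -/
def outer {ι : Type*} (u v : ι → ℝ) : Matrix ι ι ℝ := Matrix.of fun i j => u i * v j

/-- Column submatrix given by a finite index set. -/
def colSub {m n : Type*} (A : Matrix m n ℝ) (s : Finset n) : Matrix m s ℝ :=
  Matrix.of fun i j => A i j

lemma enorm_nonneg' {ι : Type*} [Fintype ι] (v : ι → ℝ) : 0 ≤ _root_.enorm v := Real.sqrt_nonneg _

lemma enorm_mulVec_le {m n : Type*} [Fintype m] [Fintype n] (A : Matrix m n ℝ)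
    (x : n → ℝ) (hx : _root_.enorm x = 1) : _root_.enorm (A.mulVec x) ≤ frobNorm A := by
  have hx2 : ∑ j, x j ^ 2 = 1 := by
    have := Real.sqrt_eq_one.mp hx
    exact this
  unfold _root_.enorm frobNorm
  apply Real.sqrt_le_sqrt
  calc ∑ i, A.mulVec x i ^ 2
      ≤ ∑ i, (∑ j, A i j ^ 2) * (∑ j, x j ^ 2) := by
        refine Finset.sum_le_sum fun i _ => ?_
        exact Finset.sum_mul_sq_le_sq_mul_sq _ _ _
    _ = ∑ i, ∑ j, A i j ^ 2 := by simp [hx2]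

/-- If u, v are unit vectors with ⟨u,v⟩ ≥ 0 and ‖uuᵀ − vvᵀ‖₂ ≤ ε,
then ‖u − v‖₂ ≤ √2 ε. -/
theorem stmt_0 {n : ℕ} (u v : Fin n → ℝ) (ε : ℝ)
    (hu : _root_.enorm u = 1) (hv : _root_.enorm v = 1) (hip : 0 ≤ ip u v)
    (h : specNorm (outer u u - outer v v) ≤ ε) :
    _root_.enorm (u - v) ≤ Real.sqrt 2 * ε := by
  set t := ip u v with ht
  have hts : ∑ i, u i * v i = t := rfl
  have hu2 : ∑ i, u i ^ 2 = 1 := Real.sqrt_eq_one.mp hu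
  have hv2 : ∑ i, v i ^ 2 = 1 := Real.sqrt_eq_one.mp hv
  have hv2' : ∑ i, v i * v i = 1 := by simpa [sq] using hv2
  have hcs : t ^ 2 ≤ 1 := by
    have := Finset.sum_mul_sq_le_sq_mul_sq Finset.univ u v
    rw [hu2, hv2, hts] at this
    simpa using this
  have ht1 : t ≤ 1 := by nlinarith
  set A := outer u u - outer v v with hA
  have hAv : A.mulVec v = fun i => u i * t - v i := by
    funext i
    show ∑ x, A i x * v x = _
    have hAe : ∀ x, A i x = u i * u x - v i * v x := fun x => rfl
    calc ∑ x, A i x * v x = ∑ x, (u i * (u x * v x) - v i * (v x * v x)) := by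
          refine Finset.sum_congr rfl fun x _ => ?_
          rw [hAe]; ring
      _ = u i * (∑ x, u x * v x) - v i * (∑ x, v x * v x) := by
          rw [Finset.sum_sub_distrib, Finset.mul_sum, Finset.mul_sum]
      _ = u i * t - v i := by rw [hts, hv2', mul_one]
  have hnormAv : _root_.enorm (A.mulVec v) = Real.sqrt (1 - t^2) := by
    rw [hAv]; unfold _root_.enorm
    congr 1
    have : ∑ i, (u i * t - v i) ^ 2
        = t^2 * (∑ i, u i ^ 2) - 2*t*(∑ i, u i * v i) + ∑ i, v i ^ 2 := by
      rw [Finset.mul_sum, Finset.mul_sum, ← Finset.sum_sub_distrib, ← Finset.sum_add_distrib]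
      congr 1; funext i; ring
    rw [this, hu2, hv2, hts]; ring
  have hbdd : BddAbove ((fun x : Fin n → ℝ => _root_.enorm (A.mulVec x)) '' {x | _root_.enorm x = 1}) := by
    refine ⟨frobNorm A, ?_⟩
    rintro y ⟨x, hx, rfl⟩
    exact enorm_mulVec_le A x hx
  have hle : Real.sqrt (1 - t^2) ≤ specNorm A := by
    rw [← hnormAv]
    exact le_csSup hbdd ⟨v, hv, rfl⟩
  have hε0 : 0 ≤ ε := le_trans (Real.sqrt_nonneg _) (hle.trans h)
  have hsq : 1 - t^2 ≤ ε^2 := by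
    have h' := hle.trans h
    nlinarith [Real.sq_sqrt (by nlinarith : (0:ℝ) ≤ 1 - t^2), Real.sqrt_nonneg (1 - t^2)]
  have key : ∑ i, (u - v) i ^ 2 = 2 - 2*t := by
    have : ∑ i, (u i - v i) ^ 2
        = (∑ i, u i ^ 2) - 2*(∑ i, u i * v i) + ∑ i, v i ^ 2 := by
      rw [Finset.mul_sum, ← Finset.sum_sub_distrib, ← Finset.sum_add_distrib]
      congr 1; funext i; ring
    rw [hts] at this
    calc ∑ i, (u - v) i ^ 2 = ∑ i, (u i - v i) ^ 2 := rfl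
      _ = 2 - 2*t := by rw [this, hu2, hv2]; ring
  unfold _root_.enorm
  rw [key]
  have h2 : 2 - 2*t ≤ 2 * ε^2 := by nlinarith
  calc Real.sqrt (2 - 2*t) ≤ Real.sqrt (2 * ε^2) := Real.sqrt_le_sqrt h2
    _ = Real.sqrt 2 * ε := by
        rw [Real.sqrt_mul (by norm_num), Real.sqrt_sq hε0]
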